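/- For every c > 0 there exists a constant C > 0 (depending only on c) with the following property. Let G = (V, E) be a simple graph on k ≥ 2 vertices. Suppose that for each vertex v ∈ V there exists a set of vertices N_v ⊆ V with |N_v| ≤ c·√k such that for every integer s with 1 ≤ s ≤ k, the number of vertices w ∈ V \ N_v whose common neighborhood with v satisfies |N(v) ∩ N(w)| ≥ s is at most c·k/s. Then the number of edges of G satisfies |E| ≤ C · √(log k) · k^{3/2}. -/
import Mathlib

open Finset

private lemma aux_layer {α : Type*} (A : Finset α) (f : α → ℕ) (M : ℕ)
    (hM : ∀ a ∈ A, f a ≤ M) :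
    ∑ a ∈ A, f a = ∑ s ∈ Finset.range M, (A.filter fun a => s < f a).card := by
  classical
  have h1 : ∀ a ∈ A, f a = ((Finset.range M).filter fun s => s < f a).card := by
    intro a ha
    have : ((Finset.range M).filter fun s => s < f a) = Finset.range (f a) := by
      ext s; simp only [mem_filter, mem_range]
      constructor
      · rintro ⟨_, h⟩; exact h
      · intro h; exact ⟨lt_of_lt_of_le h (hM a ha), h⟩
    rw [this, card_range]
  rw [Finset.sum_congr rfl h1]
  simp only [Finset.card_filter]
  rw [Finset.sum_comm]

private lemma aux_quad {x a b : ℝ} (hx : 0 ≤ x) (ha : 0 ≤ a) (hb : 0 ≤ b)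
    (h : 4 * x ^ 2 ≤ 2 * a * x + b) : x ≤ a + Real.sqrt b := by
  by_contra hc
  push_neg at hc
  have hs : Real.sqrt b * Real.sqrt b = b := Real.mul_self_sqrt hb
  have h0 : (0:ℝ) ≤ Real.sqrt b := Real.sqrt_nonneg b
  nlinarith [mul_nonneg (mul_nonneg h0 h0) hx, mul_nonneg h0 hx]

private lemma aux_dc {k : ℕ} (G : SimpleGraph (Fin k)) [DecidableRel G.Adj] :
    ∑ v : Fin k, ∑ w : Fin k, (G.neighborFinset v ∩ G.neighborFinset w).card
      = ∑ u : Fin k, (G.degree u) ^ 2 := by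
  have key : ∀ s : Finset (Fin k), s.card = ∑ u : Fin k, if u ∈ s then 1 else 0 := by
    intro s
    rw [Finset.sum_ite_mem, Finset.univ_inter, Finset.sum_const, smul_eq_mul, mul_one]
  have deg : ∀ u : Fin k, (∑ v : Fin k, if G.Adj v u then 1 else 0) = G.degree u := by
    intro u
    rw [← SimpleGraph.card_neighborFinset_eq_degree, key]
    simp [SimpleGraph.mem_neighborFinset, G.adj_comm]
  calc ∑ v : Fin k, ∑ w : Fin k, (G.neighborFinset v ∩ G.neighborFinset w).card
      = ∑ v : Fin k, ∑ w : Fin k, ∑ u : Fin k,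
          (if G.Adj v u then 1 else 0) * (if G.Adj w u then 1 else 0) := by
        refine Finset.sum_congr rfl fun v _ => Finset.sum_congr rfl fun w _ => ?_
        rw [key]
        refine Finset.sum_congr rfl fun u _ => ?_
        by_cases h1 : G.Adj v u <;> by_cases h2 : G.Adj w u <;>
          simp [Finset.mem_inter, SimpleGraph.mem_neighborFinset, h1, h2]
    _ = ∑ v : Fin k, ∑ u : Fin k, ∑ w : Fin k,
          (if G.Adj v u then 1 else 0) * (if G.Adj w u then 1 else 0) :=
        Finset.sum_congr rfl fun v _ => Finset.sum_comm
    _ = ∑ u : Fin k, ∑ v : Fin k, ∑ w : Fin k,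
          (if G.Adj v u then 1 else 0) * (if G.Adj w u then 1 else 0) :=
        Finset.sum_comm
    _ = ∑ u : Fin k, (G.degree u) ^ 2 := by
        refine Finset.sum_congr rfl fun u _ => ?_
        rw [← Finset.sum_mul_sum, deg, sq]

theorem few_edges_of_few_common_neighbors :
    ∀ c : ℝ, 0 < c → ∃ C : ℝ, 0 < C ∧
      ∀ (k : ℕ), 2 ≤ k → ∀ (G : SimpleGraph (Fin k)),
        (∀ v : Fin k, ∃ Nv : Set (Fin k),
          (Nv.ncard : ℝ) ≤ c * Real.sqrt k ∧
          ∀ s : ℕ, 1 ≤ s → s ≤ k →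
            ({w : Fin k | w ∉ Nv ∧
                s ≤ (G.neighborSet v ∩ G.neighborSet w).ncard}.ncard : ℝ) ≤
              c * k / s) →
        (G.edgeSet.ncard : ℝ) ≤ C * Real.sqrt (Real.log k) * (k : ℝ) ^ (3 / 2 : ℝ) := by
  intro c hc
  have hlog2 : (0:ℝ) < Real.log 2 := Real.log_pos (by norm_num)
  refine ⟨c / Real.sqrt (Real.log 2) + Real.sqrt c * Real.sqrt (1 / Real.log 2 + 1),
    by positivity, ?_⟩
  intro k hk G h
  classical
  haveI : DecidableRel G.Adj := Classical.decRel _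
  set codeg : Fin k → Fin k → ℕ :=
    fun v w => (G.neighborFinset v ∩ G.neighborFinset w).card with hcodeg
  have hkpos : (0:ℝ) < k := by positivity
  have hk1 : (1:ℝ) ≤ k := by exact_mod_cast Nat.one_le_of_lt hk
  have hlogk : Real.log 2 ≤ Real.log k := by
    apply Real.log_le_log (by norm_num); exact_mod_cast hk
  have hlogkpos : (0:ℝ) < Real.log k := lt_of_lt_of_le hlog2 hlogk
  -- ncard/finset card for codegrees
  have hcode : ∀ v w : Fin k,
      (G.neighborSet v ∩ G.neighborSet w).ncard = codeg v w := by
    intro v w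
    rw [Set.ncard_eq_toFinset_card', Set.toFinset_inter, hcodeg]
    congr 1
  -- per-vertex bound
  have perv : ∀ v : Fin k,
      (∑ w : Fin k, (codeg v w : ℝ)) ≤
        c * Real.sqrt k * G.degree v + c * k * (1 + Real.log k) := by
    intro v
    obtain ⟨Nv, hNv1, hNv2⟩ := h v
    rw [← Finset.sum_filter_add_sum_filter_not Finset.univ (fun w => w ∈ Nv)]
    have partA : (∑ w ∈ Finset.univ.filter (fun w => w ∈ Nv), (codeg v w : ℝ))
        ≤ c * Real.sqrt k * G.degree v := by
      have hbd : ∀ w, (codeg v w : ℝ) ≤ G.degree v := by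
        intro w
        have : codeg v w ≤ G.degree v := by
          rw [← SimpleGraph.card_neighborFinset_eq_degree]
          exact Finset.card_le_card (Finset.inter_subset_left)
        exact_mod_cast this
      calc (∑ w ∈ Finset.univ.filter (fun w => w ∈ Nv), (codeg v w : ℝ))
          ≤ ∑ _w ∈ Finset.univ.filter (fun w => w ∈ Nv), (G.degree v : ℝ) :=
            Finset.sum_le_sum fun w _ => hbd w
        _ = ((Finset.univ.filter (fun w => w ∈ Nv)).card : ℝ) * G.degree v := by
            rw [Finset.sum_const, nsmul_eq_mul]
        _ ≤ c * Real.sqrt k * G.degree v := by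
            have hcard : (Finset.univ.filter (fun w => w ∈ Nv)).card = Nv.ncard := by
              rw [Set.ncard_eq_toFinset_card']
              congr 1
              ext w; simp
            rw [hcard]
            exact mul_le_mul_of_nonneg_right hNv1 (by positivity)
    have partB : (∑ w ∈ Finset.univ.filter (fun w => w ∉ Nv), (codeg v w : ℝ))
        ≤ c * k * (1 + Real.log k) := by
      set A := Finset.univ.filter (fun w => (w : Fin k) ∉ Nv) with hA
      have hlay : ∑ w ∈ A, codeg v w
          = ∑ s ∈ Finset.range k, (A.filter fun w => s < codeg v w).card := by
        apply aux_layer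
        intro w _
        calc codeg v w ≤ (Finset.univ : Finset (Fin k)).card :=
              Finset.card_le_univ _
          _ = k := by simp
      have hstep : ∀ i ∈ Finset.range k,
          ((A.filter fun w => i < codeg v w).card : ℝ) ≤ c * k / (i + 1) := by
        intro i hi
        rw [Finset.mem_range] at hi
        have := hNv2 (i + 1) (Nat.le_add_left 1 i) hi
        have hset : {w : Fin k | w ∉ Nv ∧
            (i + 1) ≤ (G.neighborSet v ∩ G.neighborSet w).ncard}.ncard
            = (A.filter fun w => i < codeg v w).card := by
          rw [Set.ncard_eq_toFinset_card']
          congr 1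
          ext w
          simp only [Set.mem_toFinset, Set.mem_setOf_eq, hA, Finset.mem_filter,
            Finset.filter_filter, Finset.mem_univ, true_and, hcode]
          exact and_congr_right fun _ => Nat.succ_le_iff
        rw [hset] at this
        exact_mod_cast this
      calc (∑ w ∈ A, (codeg v w : ℝ))
          = ((∑ w ∈ A, codeg v w : ℕ) : ℝ) := by push_cast; ring
        _ = ((∑ s ∈ Finset.range k, (A.filter fun w => s < codeg v w).card : ℕ) : ℝ) := by
            rw [hlay]
        _ = ∑ s ∈ Finset.range k, ((A.filter fun w => s < codeg v w).card : ℝ) := by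
            push_cast; ring
        _ ≤ ∑ i ∈ Finset.range k, c * k / (i + 1) := Finset.sum_le_sum hstep
        _ = c * k * ∑ i ∈ Finset.range k, ((i : ℝ) + 1)⁻¹ := by
            rw [Finset.mul_sum]
            exact Finset.sum_congr rfl fun i _ => by rw [div_eq_mul_inv]
        _ = c * k * (harmonic k : ℝ) := by
            simp only [harmonic]
            push_cast
            ring
        _ ≤ c * k * (1 + Real.log k) := by
            have := harmonic_le_one_add_log k
            have hck : (0:ℝ) ≤ c * k := by positivity
            exact mul_le_mul_of_nonneg_left this hck
    linarith
  -- sum over v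
  have total : (∑ u : Fin k, (G.degree u : ℝ) ^ 2)
      ≤ c * Real.sqrt k * (2 * G.edgeFinset.card) + c * k ^ 2 * (1 + Real.log k) := by
    have hdc : (∑ u : Fin k, (G.degree u : ℝ) ^ 2)
        = ∑ v : Fin k, ∑ w : Fin k, (codeg v w : ℝ) := by
      exact_mod_cast (aux_dc G).symm
    rw [hdc]
    have hsum : (∑ v : Fin k, ∑ w : Fin k, (codeg v w : ℝ))
        ≤ ∑ v : Fin k, (c * Real.sqrt k * G.degree v + c * k * (1 + Real.log k)) :=
      Finset.sum_le_sum fun v _ => perv v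
    have hdegsum : (∑ v : Fin k, (G.degree v : ℝ)) = 2 * G.edgeFinset.card := by
      have h0 := G.sum_degrees_eq_twice_card_edges
      calc (∑ v : Fin k, (G.degree v : ℝ)) = ((∑ v : Fin k, G.degree v : ℕ) : ℝ) := by
            push_cast; ring
        _ = ((2 * G.edgeFinset.card : ℕ) : ℝ) := by exact_mod_cast h0
        _ = 2 * (G.edgeFinset.card : ℝ) := by push_cast; ring
    calc (∑ v : Fin k, ∑ w : Fin k, (codeg v w : ℝ))
        ≤ ∑ v : Fin k, (c * Real.sqrt k * G.degree v + c * k * (1 + Real.log k)) := hsum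
      _ = c * Real.sqrt k * (∑ v : Fin k, (G.degree v : ℝ))
          + (Fintype.card (Fin k)) * (c * k * (1 + Real.log k)) := by
          rw [Finset.sum_add_distrib, Finset.sum_const, ← Finset.mul_sum, nsmul_eq_mul]
          simp
      _ = c * Real.sqrt k * (2 * G.edgeFinset.card) + c * k ^ 2 * (1 + Real.log k) := by
          rw [hdegsum, Fintype.card_fin]
          ring
  -- Cauchy-Schwarz
  set E : ℝ := (G.edgeFinset.card : ℝ) with hE
  have hEnn : (0:ℝ) ≤ E := by positivity
  have hcs : (2 * E) ^ 2 ≤ k * ∑ u : Fin k, (G.degree u : ℝ) ^ 2 := by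
    have := sq_sum_le_card_mul_sum_sq (s := (Finset.univ : Finset (Fin k)))
      (f := fun u => (G.degree u : ℝ))
    have hdegsum : (∑ v : Fin k, (G.degree v : ℝ)) = 2 * E := by
      have h0 := G.sum_degrees_eq_twice_card_edges
      rw [hE]
      calc (∑ v : Fin k, (G.degree v : ℝ)) = ((∑ v : Fin k, G.degree v : ℕ) : ℝ) := by
            push_cast; ring
        _ = ((2 * G.edgeFinset.card : ℕ) : ℝ) := by exact_mod_cast h0
        _ = 2 * (G.edgeFinset.card : ℝ) := by push_cast; ring
    rw [hdegsum] at this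
    simpa using this
  have hquad : 4 * E ^ 2 ≤ 2 * (c * (k * Real.sqrt k)) * E
      + c * k ^ 3 * (1 + Real.log k) := by
    have h1 : k * (c * Real.sqrt k * (2 * E) + c * k ^ 2 * (1 + Real.log k))
        = 2 * (c * (k * Real.sqrt k)) * E + c * k ^ 3 * (1 + Real.log k) := by ring
    nlinarith [mul_le_mul_of_nonneg_left total (le_of_lt hkpos)]
  have hb : (0:ℝ) ≤ c * k ^ 3 * (1 + Real.log k) := by positivity
  have key : E ≤ c * (k * Real.sqrt k)
      + Real.sqrt (c * k ^ 3 * (1 + Real.log k)) :=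
    aux_quad hEnn (by positivity) hb hquad
  -- convert to final form
  have hks : (k : ℝ) ^ (3 / 2 : ℝ) = k * Real.sqrt k := by
    have h1 : (k:ℝ) ^ (3 / 2 : ℝ) = ((k:ℝ) ^ (1:ℝ)) * ((k:ℝ) ^ (1/2:ℝ)) := by
      rw [← Real.rpow_add hkpos]; norm_num
    rw [h1, Real.rpow_one, ← Real.sqrt_eq_rpow]
  have hedge : G.edgeSet.ncard = G.edgeFinset.card := by
    rw [← Set.ncard_coe_finset, SimpleGraph.coe_edgeFinset]
  have hsl2 : (0:ℝ) < Real.sqrt (Real.log 2) := Real.sqrt_pos.mpr hlog2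
  have hkk : (0:ℝ) ≤ (k:ℝ) * Real.sqrt k := by positivity
  have t1 : c * ((k:ℝ) * Real.sqrt k)
      ≤ c / Real.sqrt (Real.log 2) * Real.sqrt (Real.log k) * ((k:ℝ) * Real.sqrt k) := by
    have hmono : Real.sqrt (Real.log 2) ≤ Real.sqrt (Real.log k) := Real.sqrt_le_sqrt hlogk
    have h1 : c ≤ c / Real.sqrt (Real.log 2) * Real.sqrt (Real.log k) := by
      rw [div_mul_eq_mul_div, le_div_iff₀ hsl2]
      nlinarith
    exact mul_le_mul_of_nonneg_right h1 hkk
  have hk3 : Real.sqrt ((k:ℝ)^3) = (k:ℝ) * Real.sqrt k := by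
    have h2 : ((k:ℝ)^3) = ((k:ℝ) * Real.sqrt k)^2 := by
      rw [mul_pow, Real.sq_sqrt (le_of_lt hkpos)]; ring
    rw [h2, Real.sqrt_sq hkk]
  have t2 : Real.sqrt (c * (k:ℝ)^3 * (1 + Real.log k))
      ≤ Real.sqrt c * Real.sqrt (1/Real.log 2 + 1) * Real.sqrt (Real.log k)
        * ((k:ℝ) * Real.sqrt k) := by
    have h2 : (1:ℝ) ≤ Real.log k / Real.log 2 := (one_le_div hlog2).mpr hlogk
    have e0 : (1:ℝ) + Real.log k ≤ (1/Real.log 2 + 1) * Real.log k := by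
      calc (1:ℝ) + Real.log k ≤ Real.log k / Real.log 2 + Real.log k := by linarith
        _ = (1/Real.log 2 + 1) * Real.log k := by ring
    have e1 : c * (k:ℝ)^3 * (1 + Real.log k)
        ≤ c * (k:ℝ)^3 * ((1/Real.log 2 + 1) * Real.log k) :=
      mul_le_mul_of_nonneg_left e0 (by positivity)
    calc Real.sqrt (c * (k:ℝ)^3 * (1 + Real.log k))
        ≤ Real.sqrt (c * (k:ℝ)^3 * ((1/Real.log 2 + 1) * Real.log k)) :=
          Real.sqrt_le_sqrt e1
      _ = Real.sqrt c * Real.sqrt ((k:ℝ)^3)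
          * (Real.sqrt (1/Real.log 2 + 1) * Real.sqrt (Real.log k)) := by
          rw [Real.sqrt_mul (by positivity), Real.sqrt_mul (by positivity),
            Real.sqrt_mul (by positivity)]
      _ = Real.sqrt c * Real.sqrt (1/Real.log 2 + 1) * Real.sqrt (Real.log k)
          * ((k:ℝ) * Real.sqrt k) := by rw [hk3]; ring
  calc (G.edgeSet.ncard : ℝ) = E := by rw [hedge]
    _ ≤ c * ((k:ℝ) * Real.sqrt k) + Real.sqrt (c * (k:ℝ)^3 * (1 + Real.log k)) := key
    _ ≤ c / Real.sqrt (Real.log 2) * Real.sqrt (Real.log k) * ((k:ℝ) * Real.sqrt k)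
        + Real.sqrt c * Real.sqrt (1/Real.log 2 + 1) * Real.sqrt (Real.log k)
          * ((k:ℝ) * Real.sqrt k) := add_le_add t1 t2
    _ = (c / Real.sqrt (Real.log 2) + Real.sqrt c * Real.sqrt (1 / Real.log 2 + 1))
        * Real.sqrt (Real.log k) * (k : ℝ) ^ (3 / 2 : ℝ) := by rw [hks]; ring
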